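/- Let H, H', H'' be complex Hilbert spaces, let Z : H → H' have parametrix Q, let Z' : H' → H'' have parametrix Q', and let R be any parametrix of Z'∘Z : H → H''. Define continuous operators on H × H' × H'' by A₃(u,v,w) = (u − R(Z'(Z u)), 0, Z'(Z(R w)) − w), A₁(u,v,w) = (u − Q(Z u), Z(Q v) − v, 0), and A₂(u,v,w) = (0, v − Q'(Z' v), Z'(Q' w) − w). Then A₃ − A₁ − A₂ lies in [F(H × H' × H''), F(H × H' × H'')]; that is, the logarithm of the composed Fredholm morphism is additive modulo sums of commutators of finite-rank operators. -/

import Mathlib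

/-- A continuous linear map is of finite rank if its range is finite dimensional. -/
def FiniteRank {V W : Type*} [NormedAddCommGroup V] [NormedSpace ℂ V]
    [NormedAddCommGroup W] [NormedSpace ℂ W] (T : V →L[ℂ] W) : Prop :=
  FiniteDimensional ℂ (LinearMap.range (T : V →ₗ[ℂ] W))

/-- `[F(V), F(V)]`: the additive subgroup of the continuous endomorphisms of `V`
generated by commutators of finite-rank operators. -/
noncomputable def frCommutators (V : Type*) [NormedAddCommGroup V] [NormedSpace ℂ V] :
    AddSubgroup (V →L[ℂ] V) :=
  AddSubgroup.closure
    {C | ∃ A B : V →L[ℂ] V, FiniteRank A ∧ FiniteRank B ∧ C = A.comp B - B.comp A}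

section FR
variable {U V W X : Type*} [NormedAddCommGroup U] [NormedSpace ℂ U]
  [NormedAddCommGroup V] [NormedSpace ℂ V]
  [NormedAddCommGroup W] [NormedSpace ℂ W]
  [NormedAddCommGroup X] [NormedSpace ℂ X]

lemma fr_of_range_le {T S : V →L[ℂ] W} (hS : FiniteRank S)
    (h : LinearMap.range (T : V →ₗ[ℂ] W) ≤ LinearMap.range (S : V →ₗ[ℂ] W)) : FiniteRank T := by
  unfold FiniteRank at *
  haveI := hS
  exact Submodule.finiteDimensional_of_le h

lemma fr_comp_left (S : W →L[ℂ] X) {T : V →L[ℂ] W} (hT : FiniteRank T) :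
    FiniteRank (S.comp T) := by
  unfold FiniteRank at *
  haveI := hT
  rw [ContinuousLinearMap.toLinearMap_comp, LinearMap.range_comp]
  exact Module.Finite.map _ _

lemma fr_comp_right {S : W →L[ℂ] X} (hS : FiniteRank S) (T : V →L[ℂ] W) :
    FiniteRank (S.comp T) := by
  unfold FiniteRank at *
  haveI := hS
  refine Submodule.finiteDimensional_of_le (S₂ := LinearMap.range (S : W →ₗ[ℂ] X)) ?_
  rintro x ⟨y, rfl⟩
  exact ⟨T y, rfl⟩

lemma fr_neg {T : V →L[ℂ] W} (hT : FiniteRank T) : FiniteRank (-T) := by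
  unfold FiniteRank at *
  rw [ContinuousLinearMap.coe_neg, LinearMap.range_neg]
  exact hT

lemma fr_add {T S : V →L[ℂ] W} (hT : FiniteRank T) (hS : FiniteRank S) :
    FiniteRank (T + S) := by
  unfold FiniteRank at *
  have h : LinearMap.range ((T + S : V →L[ℂ] W) : V →ₗ[ℂ] W) ≤
      LinearMap.range (T : V →ₗ[ℂ] W) ⊔ LinearMap.range (S : V →ₗ[ℂ] W) := by
    rintro x ⟨y, rfl⟩
    exact Submodule.add_mem_sup ⟨y, rfl⟩ ⟨y, rfl⟩
  haveI := hT; haveI := hS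
  haveI : FiniteDimensional ℂ
      ↥(LinearMap.range (T : V →ₗ[ℂ] W) ⊔ LinearMap.range (S : V →ₗ[ℂ] W)) :=
    Submodule.finiteDimensional_sup _ _
  exact Submodule.finiteDimensional_of_le h

lemma fr_sub {T S : V →L[ℂ] W} (hT : FiniteRank T) (hS : FiniteRank S) :
    FiniteRank (T - S) := by
  rw [sub_eq_add_neg]; exact fr_add hT (fr_neg hS)

lemma fr_zero : FiniteRank (0 : V →L[ℂ] W) := by
  unfold FiniteRank
  rw [ContinuousLinearMap.coe_zero, LinearMap.range_zero]
  infer_instance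

lemma fr_prod {T : V →L[ℂ] W} {S : V →L[ℂ] X} (hT : FiniteRank T) (hS : FiniteRank S) :
    FiniteRank (T.prod S) := by
  unfold FiniteRank at *
  haveI := hT; haveI := hS
  have h := LinearMap.range_prod_le (T : V →ₗ[ℂ] W) (S : V →ₗ[ℂ] X)
  haveI : FiniteDimensional ℂ
      ↥((LinearMap.range (T : V →ₗ[ℂ] W)).prod (LinearMap.range (S : V →ₗ[ℂ] X))) := by
    rw [LinearMap.prod_eq_sup_map]
    haveI : FiniteDimensional ℂ
        ↥((LinearMap.range (T : V →ₗ[ℂ] W)).map (LinearMap.inl ℂ W X)) :=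
      Module.Finite.map _ _
    haveI : FiniteDimensional ℂ
        ↥((LinearMap.range (S : V →ₗ[ℂ] X)).map (LinearMap.inr ℂ W X)) :=
      Module.Finite.map _ _
    exact Submodule.finiteDimensional_sup _ _
  refine Submodule.finiteDimensional_of_le (S₂ := (LinearMap.range (T : V →ₗ[ℂ] W)).prod (LinearMap.range (S : V →ₗ[ℂ] X))) ?_
  rw [ContinuousLinearMap.coe_prod]
  exact h

lemma fr_smulRight (f : V →L[ℂ] ℂ) (e : V) : FiniteRank (f.smulRight e) := by
  unfold FiniteRank
  refine Submodule.finiteDimensional_of_le (S₂ := Submodule.span ℂ {e}) ?_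
  rintro x ⟨y, rfl⟩
  exact Submodule.smul_mem _ _ (Submodule.mem_span_singleton_self e)

end FR

section Comm
variable {V : Type*} [NormedAddCommGroup V] [NormedSpace ℂ V]

lemma comm_smulRight_mem (T : V →L[ℂ] V) (e : V) (f : V →L[ℂ] ℂ) :
    T.comp (f.smulRight e) - (f.smulRight e).comp T ∈ frCommutators V := by
  by_cases he : e = 0
  · have h0 : f.smulRight e = 0 := by ext x; simp [he]
    rw [h0]
    simp only [ContinuousLinearMap.comp_zero, ContinuousLinearMap.zero_comp, sub_zero]
    exact AddSubgroup.zero_mem _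
  · obtain ⟨g0, -, hg0⟩ := exists_dual_vector ℂ e (norm_ne_zero_iff.mpr he)
    set g : V →L[ℂ] ℂ := (‖e‖ : ℂ)⁻¹ • g0 with hgdef
    have hne : (‖e‖ : ℂ) ≠ 0 := by
      simpa using norm_ne_zero_iff.mpr he
    have hg : g e = 1 := by
      rw [hgdef]
      simp only [ContinuousLinearMap.smul_apply, hg0, smul_eq_mul]
      exact inv_mul_cancel₀ hne
    set C₁ := (g.smulRight (T e)).comp (f.smulRight e) -
      (f.smulRight e).comp (g.smulRight (T e)) with hC₁
    set C₂ := (g.smulRight e).comp ((f.comp T).smulRight e) -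
      ((f.comp T).smulRight e).comp (g.smulRight e) with hC₂
    have key : T.comp (f.smulRight e) - (f.smulRight e).comp T = C₁ - C₂ := by
      rw [hC₁, hC₂]
      ext x
      simp only [ContinuousLinearMap.sub_apply, ContinuousLinearMap.comp_apply,
        ContinuousLinearMap.smulRight_apply, map_smul, smul_smul, smul_eq_mul, hg,
        ContinuousLinearMap.map_smul]
      module
    rw [key]
    have h₁ : C₁ ∈ frCommutators V := by
      apply AddSubgroup.subset_closure
      exact ⟨_, _, fr_smulRight g (T e), fr_smulRight f e, rfl⟩
    have h₂ : C₂ ∈ frCommutators V := by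
      apply AddSubgroup.subset_closure
      exact ⟨_, _, fr_smulRight g e, fr_smulRight (f.comp T) e, rfl⟩
    exact AddSubgroup.sub_mem _ h₁ h₂

lemma comm_fr_mem (T F : V →L[ℂ] V) (hF : FiniteRank F) :
    T.comp F - F.comp T ∈ frCommutators V := by
  haveI : FiniteDimensional ℂ (LinearMap.range (F : V →ₗ[ℂ] V)) := hF
  set p := LinearMap.range (F : V →ₗ[ℂ] V) with hp
  let b := Module.finBasis ℂ p
  let φ : V →L[ℂ] p := F.codRestrict p (fun x => LinearMap.mem_range_self _ x)
  let r : Fin (Module.finrank ℂ p) → (V →L[ℂ] V) := fun i =>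
    ((LinearMap.toContinuousLinearMap (b.coord i)).comp φ).smulRight (b i : V)
  have hF_eq : F = ∑ i, r i := by
    ext x
    have hrep := b.sum_repr (φ x)
    have : ((∑ i, (b.repr (φ x)) i • b i : p) : V) = ((φ x : p) : V) := by
      exact congrArg _ hrep
    rw [Submodule.coe_sum] at this
    simp only [SetLike.val_smul] at this
    simpa [r, φ, ContinuousLinearMap.smulRight_apply] using this.symm
  have hsplit : T.comp F - F.comp T = ∑ i, (T.comp (r i) - (r i).comp T) := by
    rw [hF_eq]
    ext x
    simp [ContinuousLinearMap.sum_apply, map_sum, Finset.sum_sub_distrib]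
  rw [hsplit]
  exact AddSubgroup.sum_mem _ (fun i _ => comm_smulRight_mem T _ _)

end Comm

/-- `Q` is a parametrix for `Z`: `Q∘Z - id` and `Z∘Q - id` are finite rank. -/
def IsParametrix {H H' : Type*} [NormedAddCommGroup H] [NormedSpace ℂ H]
    [NormedAddCommGroup H'] [NormedSpace ℂ H']
    (Z : H →L[ℂ] H') (Q : H' →L[ℂ] H) : Prop :=
  FiniteRank (Q.comp Z - ContinuousLinearMap.id ℂ H) ∧
    FiniteRank (Z.comp Q - ContinuousLinearMap.id ℂ H')

section Ops

variable {H H' H'' : Type*} [NormedAddCommGroup H] [NormedSpace ℂ H]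
  [NormedAddCommGroup H'] [NormedSpace ℂ H']
  [NormedAddCommGroup H''] [NormedSpace ℂ H'']

/-- Projection onto the first factor of `H × H' × H''`. -/
noncomputable def pr1 : (H × H' × H'') →L[ℂ] H := ContinuousLinearMap.fst ℂ H (H' × H'')

/-- Projection onto the second factor of `H × H' × H''`. -/
noncomputable def pr2 : (H × H' × H'') →L[ℂ] H' :=
  (ContinuousLinearMap.fst ℂ H' H'').comp (ContinuousLinearMap.snd ℂ H (H' × H''))

/-- Projection onto the third factor of `H × H' × H''`. -/
noncomputable def pr3 : (H × H' × H'') →L[ℂ] H'' :=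
  (ContinuousLinearMap.snd ℂ H' H'').comp (ContinuousLinearMap.snd ℂ H (H' × H''))

/-- `A₁(u,v,w) = (u − Q(Z u), Z(Q v) − v, 0)`. -/
noncomputable def opA1 (Z : H →L[ℂ] H') (Q : H' →L[ℂ] H) :
    (H × H' × H'') →L[ℂ] (H × H' × H'') :=
  (((ContinuousLinearMap.id ℂ H - Q.comp Z).comp pr1).prod
    ((((Z.comp Q - ContinuousLinearMap.id ℂ H').comp pr2)).prod
      (0 : (H × H' × H'') →L[ℂ] H'')))

/-- `A₂(u,v,w) = (0, v − Q'(Z' v), Z'(Q' w) − w)`. -/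
noncomputable def opA2 (Z' : H' →L[ℂ] H'') (Q' : H'' →L[ℂ] H') :
    (H × H' × H'') →L[ℂ] (H × H' × H'') :=
  ((0 : (H × H' × H'') →L[ℂ] H).prod
    ((((ContinuousLinearMap.id ℂ H' - Q'.comp Z').comp pr2)).prod
      ((Z'.comp Q' - ContinuousLinearMap.id ℂ H'').comp pr3)))

/-- `A₃(u,v,w) = (u − R(Z'(Z u)), 0, Z'(Z(R w)) − w)`. -/
noncomputable def opA3 (Z : H →L[ℂ] H') (Z' : H' →L[ℂ] H'') (R : H'' →L[ℂ] H) :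
    (H × H' × H'') →L[ℂ] (H × H' × H'') :=
  (((ContinuousLinearMap.id ℂ H - R.comp ((Z'.comp Z))).comp pr1).prod
    (((0 : (H × H' × H'') →L[ℂ] H')).prod
      (((Z'.comp Z).comp R - ContinuousLinearMap.id ℂ H'').comp pr3)))

end Ops

set_option maxHeartbeats 1000000 in
theorem stmt3 {H H' H'' : Type*}
    [NormedAddCommGroup H] [InnerProductSpace ℂ H] [CompleteSpace H]
    [NormedAddCommGroup H'] [InnerProductSpace ℂ H'] [CompleteSpace H']
    [NormedAddCommGroup H''] [InnerProductSpace ℂ H''] [CompleteSpace H'']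
    (Z : H →L[ℂ] H') (Q : H' →L[ℂ] H)
    (Z' : H' →L[ℂ] H'') (Q' : H'' →L[ℂ] H')
    (R : H'' →L[ℂ] H)
    (hQ : IsParametrix Z Q) (hQ' : IsParametrix Z' Q')
    (hR : IsParametrix (Z'.comp Z) R) :
    opA3 Z Z' R - opA1 Z Q - opA2 Z' Q' ∈ frCommutators (H × H' × H'') := by
  classical
  -- the two correction operators, which are finite rank
  set K₁ : H' →L[ℂ] H := Q - R.comp Z' with hK₁def
  set K₂ : H'' →L[ℂ] H' := Z.comp R - Q' with hK₂def
  have hK₁ : FiniteRank K₁ := by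
    have hid : K₁ = (R.comp Z').comp (Z.comp Q - ContinuousLinearMap.id ℂ H') +
        (-(R.comp (Z'.comp Z) - ContinuousLinearMap.id ℂ H)).comp Q := by
      ext x
      simp [hK₁def]
    rw [hid]
    exact fr_add (fr_comp_left _ hQ.2) (fr_comp_right (fr_neg hR.1) Q)
  have hK₂ : FiniteRank K₂ := by
    have hid : K₂ = (-(Q'.comp Z' - ContinuousLinearMap.id ℂ H')).comp (Z.comp R) +
        Q'.comp ((Z'.comp Z).comp R - ContinuousLinearMap.id ℂ H'') := by
      ext x
      simp [hK₂def]
    rw [hid]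
    exact fr_add (fr_comp_right (fr_neg hQ'.1) (Z.comp R)) (fr_comp_left _ hR.2)
  -- the operators on the product space
  set F₁ : (H × H' × H'') →L[ℂ] (H × H' × H'') :=
    (K₁.comp pr2).prod ((0 : (H × H' × H'') →L[ℂ] H').prod (0 : (H × H' × H'') →L[ℂ] H''))
    with hF₁def
  set T₁ : (H × H' × H'') →L[ℂ] (H × H' × H'') :=
    (0 : (H × H' × H'') →L[ℂ] H).prod ((Z.comp pr1).prod (0 : (H × H' × H'') →L[ℂ] H''))
    with hT₁def
  set F₂ : (H × H' × H'') →L[ℂ] (H × H' × H'') :=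
    (0 : (H × H' × H'') →L[ℂ] H).prod ((K₂.comp pr3).prod (0 : (H × H' × H'') →L[ℂ] H''))
    with hF₂def
  set T₂ : (H × H' × H'') →L[ℂ] (H × H' × H'') :=
    (0 : (H × H' × H'') →L[ℂ] H).prod ((0 : (H × H' × H'') →L[ℂ] H').prod (Z'.comp pr2))
    with hT₂def
  have hFR₁ : FiniteRank F₁ := by
    rw [hF₁def]
    exact fr_prod (fr_comp_right hK₁ _) (fr_prod fr_zero fr_zero)
  have hFR₂ : FiniteRank F₂ := by
    rw [hF₂def]
    exact fr_prod fr_zero (fr_prod (fr_comp_right hK₂ _) fr_zero)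
  have key : opA3 Z Z' R - opA1 Z Q - opA2 Z' Q' =
      (F₁.comp T₁ - T₁.comp F₁) + (T₂.comp F₂ - F₂.comp T₂) := by
    refine ContinuousLinearMap.ext fun x => ?_
    obtain ⟨u, v, w⟩ := x
    simp only [opA1, opA2, opA3, pr1, pr2, pr3, hF₁def, hT₁def, hF₂def, hT₂def, hK₁def, hK₂def,
      ContinuousLinearMap.sub_apply, ContinuousLinearMap.add_apply,
      ContinuousLinearMap.comp_apply, ContinuousLinearMap.prod_apply,
      ContinuousLinearMap.zero_apply, ContinuousLinearMap.id_apply,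
      ContinuousLinearMap.coe_fst', ContinuousLinearMap.coe_snd', Prod.mk.injEq,
      Prod.fst_sub, Prod.snd_sub, Prod.fst_add, Prod.snd_add, map_sub, map_zero,
      sub_zero, zero_sub]
    refine Prod.ext ?_ (Prod.ext ?_ ?_) <;>
      · simp [Prod.fst_add, Prod.snd_add, Prod.smul_fst, Prod.smul_snd]
        try abel
  rw [key]
  refine AddSubgroup.add_mem _ ?_ ?_
  · rw [show F₁.comp T₁ - T₁.comp F₁ = -(T₁.comp F₁ - F₁.comp T₁) from (neg_sub _ _).symm]
    exact AddSubgroup.neg_mem _ (comm_fr_mem T₁ F₁ hFR₁)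
  · exact comm_fr_mem T₂ F₂ hFR₂
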